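/- Let n ≥ 1 and let c ∈ ℂ with c ≠ 0. Consider the real-valued function g : ℂⁿ → ℝ defined by g(z) = |c + z₁² + ⋯ + zₙ²|. Then 0 is a critical point of g (the real Fréchet derivative of g at 0 vanishes), the second real Fréchet derivative of g at 0, viewed as a symmetric bilinear form B on ℝ^{2n}, is nondegenerate, and there exist real subspaces P and N of ℝ^{2n} with dim P = dim N = n, ℝ^{2n} = P ⊕ N, such that B is positive definite on P and negative definite on N; i.e., 0 is a nondegenerate critical point of g of Morse index n. -/

import Mathlib

open Complex Finset

section StmtTwoAux

open Complex Finset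

noncomputable def reAL : ℂ →L[ℝ] ℂ →L[ℝ] ℝ :=
  LinearMap.toContinuousLinearMap
  { toFun := fun w => w.re • Complex.reCLM + w.im • Complex.imCLM
    map_add' := by intro x y; simp [add_smul]; abel
    map_smul' := by intro r x; simp [Complex.smul_re, Complex.smul_im, smul_smul, smul_add] }

@[simp] lemma reAL_apply (w u : ℂ) : reAL w u = w.re * u.re + w.im * u.im := by
  simp [reAL]

noncomputable def Lq {n : ℕ} (z : Fin n → ℂ) : (Fin n → ℂ) →L[ℝ] ℂ :=
  ∑ i, (2 * z i) • (ContinuousLinearMap.proj i : (Fin n → ℂ) →L[ℝ] ℂ)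

@[simp] lemma Lq_apply {n : ℕ} (z v : Fin n → ℂ) : Lq z v = ∑ i, 2 * z i * v i := by
  simp [Lq, smul_eq_mul]

@[simp] lemma Lq_zero {n : ℕ} : Lq (0 : Fin n → ℂ) = 0 := by
  ext v; simp

lemma hasFDerivAt_q {n : ℕ} (z : Fin n → ℂ) :
    HasFDerivAt (fun y : Fin n → ℂ => ∑ i, y i ^ 2) (Lq z) z := by
  have h : ∀ i ∈ Finset.univ, HasFDerivAt (fun y : Fin n → ℂ => y i ^ 2)
      ((2 * z i) • (ContinuousLinearMap.proj i : (Fin n → ℂ) →L[ℝ] ℂ)) z := by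
    intro i _
    have hp : HasFDerivAt (fun y : Fin n → ℂ => y i)
        (ContinuousLinearMap.proj i : (Fin n → ℂ) →L[ℝ] ℂ) z :=
      (ContinuousLinearMap.proj i : (Fin n → ℂ) →L[ℝ] ℂ).hasFDerivAt
    have step : HasFDerivAt (fun y : Fin n → ℂ => y i * y i)
        (z i • (ContinuousLinearMap.proj i : (Fin n → ℂ) →L[ℝ] ℂ)
          + z i • (ContinuousLinearMap.proj i : (Fin n → ℂ) →L[ℝ] ℂ)) z := hp.mul hp
    have heq : (2 * z i) • (ContinuousLinearMap.proj i : (Fin n → ℂ) →L[ℝ] ℂ)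
        = z i • (ContinuousLinearMap.proj i : (Fin n → ℂ) →L[ℝ] ℂ)
          + z i • (ContinuousLinearMap.proj i : (Fin n → ℂ) →L[ℝ] ℂ) := by
      ext v; simp [smul_eq_mul]; ring
    rw [heq]
    simpa only [pow_two] using step
  exact HasFDerivAt.fun_sum h

lemma hasFDerivAt_abs {w : ℂ} (hw : w ≠ 0) :
    HasFDerivAt (fun y : ℂ => ‖y‖) (‖w‖⁻¹ • reAL w) w := by
  have hre : HasFDerivAt (fun y : ℂ => y.re) (Complex.reCLM : ℂ →L[ℝ] ℝ) w :=
    Complex.reCLM.hasFDerivAt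
  have him : HasFDerivAt (fun y : ℂ => y.im) (Complex.imCLM : ℂ →L[ℝ] ℝ) w :=
    Complex.imCLM.hasFDerivAt
  have hns : HasFDerivAt (fun y : ℂ => Complex.normSq y)
      ((w.re • Complex.reCLM + w.re • Complex.reCLM)
        + (w.im • Complex.imCLM + w.im • Complex.imCLM)) w := by
    simp only [Complex.normSq_apply]
    exact (hre.mul hre).add (him.mul him)
  have hnz : Complex.normSq w ≠ 0 := by simpa using hw
  have H : HasFDerivAt (fun y : ℂ => Real.sqrt (Complex.normSq y))
      ((1 / (2 * Real.sqrt (Complex.normSq w))) •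
        ((w.re • Complex.reCLM + w.re • Complex.reCLM)
          + (w.im • Complex.imCLM + w.im • Complex.imCLM))) w :=
    (Real.hasDerivAt_sqrt hnz).comp_hasFDerivAt w hns
  have heq : ‖w‖⁻¹ • reAL w
      = (1 / (2 * Real.sqrt (Complex.normSq w))) •
        ((w.re • Complex.reCLM + w.re • Complex.reCLM)
          + (w.im • Complex.imCLM + w.im • Complex.imCLM)) := by
    refine ContinuousLinearMap.ext fun u => ?_
    have habs : Real.sqrt (Complex.normSq w) = ‖w‖ := (Complex.norm_def w).symm
    have hpos : 0 < ‖w‖ := norm_pos_iff.mpr hw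
    simp only [ContinuousLinearMap.smul_apply, reAL_apply, ContinuousLinearMap.add_apply,
      Complex.reCLM_apply, Complex.imCLM_apply, smul_eq_mul, habs]
    field_simp
    ring
  rw [heq]
  simpa only [Complex.norm_def] using H

noncomputable def Phi {n : ℕ} (c : ℂ) (z : Fin n → ℂ) : (Fin n → ℂ) →L[ℝ] ℝ :=
  (‖c + ∑ i, z i ^ 2‖)⁻¹ • ((reAL (c + ∑ i, z i ^ 2)).comp (Lq z))

lemma hasFDerivAt_g {n : ℕ} (c : ℂ) (z : Fin n → ℂ) (hz : c + ∑ i, z i ^ 2 ≠ 0) :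
    HasFDerivAt (fun y : Fin n → ℂ => ‖c + ∑ i, y i ^ 2‖) (Phi c z) z := by
  have hq : HasFDerivAt (fun y : Fin n → ℂ => c + ∑ i, y i ^ 2) (Lq z) z :=
    (hasFDerivAt_q z).const_add c
  have H := (hasFDerivAt_abs hz).comp z hq
  have heq : Phi c z = ((‖c + ∑ i, z i ^ 2‖)⁻¹ • reAL (c + ∑ i, z i ^ 2)).comp (Lq z) := by
    rw [ContinuousLinearMap.smul_comp]; rfl
  rw [heq]
  exact H

lemma fderiv_g_eventually {n : ℕ} {c : ℂ} (hc : c ≠ 0) :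
    (fun z : Fin n → ℂ => fderiv ℝ (fun y : Fin n → ℂ => ‖c + ∑ i, y i ^ 2‖) z)
      =ᶠ[nhds (0 : Fin n → ℂ)] (Phi c) := by
  have hcont : Continuous (fun z : Fin n → ℂ => c + ∑ i, z i ^ 2) :=
    continuous_const.add (continuous_finset_sum _ fun i _ => (continuous_apply i).pow 2)
  have hU : IsOpen {z : Fin n → ℂ | c + ∑ i, z i ^ 2 ≠ 0} :=
    isOpen_compl_singleton.preimage hcont
  have h0 : (0 : Fin n → ℂ) ∈ {z : Fin n → ℂ | c + ∑ i, z i ^ 2 ≠ 0} := by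
    simpa using hc
  filter_upwards [hU.mem_nhds h0] with z hz using (hasFDerivAt_g c z hz).fderiv

noncomputable def LqL (n : ℕ) : (Fin n → ℂ) →L[ℝ] (Fin n → ℂ) →L[ℝ] ℂ :=
  LinearMap.toContinuousLinearMap
  { toFun := fun z => Lq z
    map_add' := by
      intro x y
      ext v
      simp only [Lq_apply, Pi.add_apply, ContinuousLinearMap.add_apply]
      rw [← Finset.sum_add_distrib]
      congr 1; funext i; ring
    map_smul' := by
      intro r x
      ext v
      simp only [Lq_apply, Pi.smul_apply, RingHom.id_apply, ContinuousLinearMap.smul_apply,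
        Finset.smul_sum]
      congr 1; funext i
      simp [Complex.real_smul]; ring }

@[simp] lemma LqL_apply {n : ℕ} (z : Fin n → ℂ) : LqL n z = Lq z := by
  simp [LqL]

lemma fderiv_Phi {n : ℕ} {c : ℂ} (hc : c ≠ 0) (v w : Fin n → ℂ) :
    fderiv ℝ (Phi (n := n) c) 0 v w
      = ‖c‖⁻¹ * ((starRingEnd ℂ c) * ∑ i, 2 * v i * w i).re := by
  classical
  have h0ne : c + ∑ i, (0 : Fin n → ℂ) i ^ 2 ≠ 0 := by simpa using hc
  have hq0 : HasFDerivAt (fun z : Fin n → ℂ => c + ∑ i, z i ^ 2) (Lq 0) (0 : Fin n → ℂ) :=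
    (hasFDerivAt_q 0).const_add c
  have h1 : HasFDerivAt (fun z : Fin n → ℂ => reAL (c + ∑ i, z i ^ 2))
      (reAL.comp (Lq 0)) (0 : Fin n → ℂ) := reAL.hasFDerivAt.comp 0 hq0
  have h2 : HasFDerivAt (fun z : Fin n → ℂ => Lq z) (LqL n) (0 : Fin n → ℂ) :=
    (LqL n).hasFDerivAt
  have h3 := h1.clm_comp h2
  have habs : HasFDerivAt (fun z : Fin n → ℂ => ‖c + ∑ i, z i ^ 2‖)
      (((‖c + ∑ i, (0:Fin n → ℂ) i ^ 2‖)⁻¹ •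
        reAL (c + ∑ i, (0:Fin n → ℂ) i ^ 2)).comp (Lq 0)) (0 : Fin n → ℂ) :=
    (hasFDerivAt_abs h0ne).comp 0 hq0
  have hne : ‖c + ∑ i, (0:Fin n → ℂ) i ^ 2‖ ≠ 0 := by simpa using hc
  have hrho : DifferentiableAt ℝ (fun z : Fin n → ℂ => (‖c + ∑ i, z i ^ 2‖)⁻¹) 0 :=
    habs.differentiableAt.inv hne
  have hΦ := hrho.hasFDerivAt.fun_smul h3
  have hfd := hΦ.fderiv
  rw [show (Phi (n := n) c) = fun z => (‖c + ∑ i, z i ^ 2‖)⁻¹ •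
      ((reAL (c + ∑ i, z i ^ 2)).comp (Lq z)) from rfl]
  rw [hfd]
  have hzero : (∑ i, (0 : Fin n → ℂ) i ^ 2) = 0 := by simp
  simp only [ContinuousLinearMap.add_apply, ContinuousLinearMap.smul_apply,
    ContinuousLinearMap.coe_comp', Function.comp_apply, ContinuousLinearMap.smulRight_apply,
    ContinuousLinearMap.flip_apply, ContinuousLinearMap.compL_apply, LqL_apply, Lq_zero,
    hzero, add_zero, ContinuousLinearMap.zero_apply, map_zero, smul_zero, zero_add,
    ContinuousLinearMap.comp_zero, ContinuousLinearMap.zero_comp, smul_eq_mul, reAL_apply,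
    Lq_apply]
  rw [show ((starRingEnd ℂ c) * ∑ i, 2 * v i * w i).re
      = c.re * (∑ i, 2 * v i * w i).re + c.im * (∑ i, 2 * v i * w i).im by
    simp [Complex.mul_re]]

lemma bform {n : ℕ} {c : ℂ} (hc : c ≠ 0) (v w : Fin n → ℂ) :
    fderiv ℝ (fun z : Fin n → ℂ =>
        fderiv ℝ (fun y : Fin n → ℂ => ‖c + ∑ i, y i ^ 2‖) z) 0 v w
      = ‖c‖⁻¹ * ((starRingEnd ℂ c) * ∑ i, 2 * v i * w i).re := by
  have h2nd : fderiv ℝ (fun z : Fin n → ℂ =>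
      fderiv ℝ (fun y : Fin n → ℂ => ‖c + ∑ i, y i ^ 2‖) z) 0
        = fderiv ℝ (Phi c) 0 :=
    (fderiv_g_eventually (n := n) hc).fderiv_eq
  rw [h2nd]
  exact fderiv_Phi hc v w

/-- the embedding `u ↦ (u i * b)_i`. -/
noncomputable def Tmap (n : ℕ) (b : ℂ) : (Fin n → ℝ) →ₗ[ℝ] (Fin n → ℂ) where
  toFun := fun u i => (u i : ℂ) * b
  map_add' := by intro u u'; funext i; simp only [Pi.add_apply, Complex.ofReal_add]; ring
  map_smul' := by
    intro r u; funext i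
    simp [Complex.real_smul]
    push_cast; ring

lemma Tmap_inj {n : ℕ} {b : ℂ} (hb : b ≠ 0) : Function.Injective (Tmap n b) := by
  intro u u' h
  funext i
  have := congrFun h i
  simp only [Tmap, LinearMap.coe_mk, AddHom.coe_mk] at this
  exact_mod_cast mul_right_cancel₀ hb this

lemma finrank_Tmap_range {n : ℕ} {b : ℂ} (hb : b ≠ 0) :
    Module.finrank ℝ (LinearMap.range (Tmap n b)) = n := by
  rw [LinearMap.finrank_range_of_inj (Tmap_inj hb), Module.finrank_pi]
  simp

lemma isCompl_ranges {n : ℕ} {b : ℂ} (hb : b ≠ 0) :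
    IsCompl (LinearMap.range (Tmap n b)) (LinearMap.range (Tmap n (b * Complex.I))) := by
  constructor
  · rw [Submodule.disjoint_def]
    rintro z ⟨u, rfl⟩ hz
    obtain ⟨u', hu'⟩ := hz
    funext i
    have hi := congrFun hu' i
    simp only [Tmap, LinearMap.coe_mk, AddHom.coe_mk] at hi ⊢
    have h1 : (u i : ℂ) = (u' i : ℂ) * Complex.I := by
      apply mul_right_cancel₀ hb
      rw [← hi]; ring
    have h2 : (u i : ℝ) = 0 := by
      have := congrArg Complex.re h1
      simpa using this
    simp [h2]
  · rw [codisjoint_iff, eq_top_iff]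
    intro z _
    rw [Submodule.mem_sup]
    refine ⟨Tmap n b (fun i => (z i / b).re), ⟨_, rfl⟩,
      Tmap n (b * Complex.I) (fun i => (z i / b).im), ⟨_, rfl⟩, ?_⟩
    funext i
    simp only [Tmap, LinearMap.coe_mk, AddHom.coe_mk, Pi.add_apply]
    have h := Complex.re_add_im (z i / b)
    calc (((z i / b).re : ℂ)) * b + ((z i / b).im : ℂ) * (b * Complex.I)
        = (((z i / b).re : ℂ) + ((z i / b).im : ℂ) * Complex.I) * b := by ring
      _ = (z i / b) * b := by rw [h]
      _ = z i := div_mul_cancel₀ _ hb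

end StmtTwoAux

/-- For `n ≥ 1` and `c ≠ 0`, the function `g z = |c + z₁² + ⋯ + zₙ²|`
on `ℂⁿ ≅ ℝ^{2n}` has a critical point at `0`, its second real derivative at `0`
is a nondegenerate bilinear form, and it splits into an `n`-dimensional positive
definite and an `n`-dimensional negative definite subspace; i.e. `0` is a
nondegenerate critical point of `g` of Morse index `n`. -/
theorem stmt_2 {n : ℕ} (hn : 1 ≤ n) {c : ℂ} (hc : c ≠ 0) :
    fderiv ℝ (fun z : Fin n → ℂ => ‖c + ∑ i, z i ^ 2‖) 0 = 0 ∧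
    (∀ v : Fin n → ℂ,
        (∀ w : Fin n → ℂ,
          fderiv ℝ (fun z : Fin n → ℂ =>
            fderiv ℝ (fun y : Fin n → ℂ => ‖c + ∑ i, y i ^ 2‖) z) 0 v w = 0) →
        v = 0) ∧
    ∃ P N : Submodule ℝ (Fin n → ℂ),
      Module.finrank ℝ P = n ∧ Module.finrank ℝ N = n ∧ IsCompl P N ∧
      (∀ v ∈ P, v ≠ 0 →
        0 < fderiv ℝ (fun z : Fin n → ℂ =>
              fderiv ℝ (fun y : Fin n → ℂ => ‖c + ∑ i, y i ^ 2‖) z) 0 v v) ∧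
      (∀ v ∈ N, v ≠ 0 →
        fderiv ℝ (fun z : Fin n → ℂ =>
          fderiv ℝ (fun y : Fin n → ℂ => ‖c + ∑ i, y i ^ 2‖) z) 0 v v < 0) := by
  classical
  have habs_pos : 0 < ‖c‖ := norm_pos_iff.mpr hc
  refine ⟨?_, ?_, ?_⟩
  · -- first derivative vanishes
    have h0ne : c + ∑ i, (0 : Fin n → ℂ) i ^ 2 ≠ 0 := by simpa using hc
    rw [(hasFDerivAt_g c 0 h0ne).fderiv]
    ext v
    simp [Phi]
  · -- nondegeneracy
    intro v hv
    have h := hv (fun i => (starRingEnd ℂ c)⁻¹ * starRingEnd ℂ (v i))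
    rw [bform hc] at h
    have hcconj : starRingEnd ℂ c ≠ 0 := by simpa using hc
    have hsum : (starRingEnd ℂ c) *
        ∑ i, 2 * v i * ((starRingEnd ℂ c)⁻¹ * starRingEnd ℂ (v i))
          = ((2 * ∑ i, Complex.normSq (v i) : ℝ) : ℂ) := by
      rw [Finset.mul_sum]
      push_cast
      rw [Finset.mul_sum]
      refine Finset.sum_congr rfl fun i _ => ?_
      have : (starRingEnd ℂ c) * (2 * v i * ((starRingEnd ℂ c)⁻¹ * starRingEnd ℂ (v i)))
          = (starRingEnd ℂ c) * (starRingEnd ℂ c)⁻¹ * (2 * (v i * starRingEnd ℂ (v i))) := by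
        ring
      rw [this, mul_inv_cancel₀ hcconj, one_mul, Complex.mul_conj]
    rw [hsum] at h
    simp only [Complex.ofReal_re] at h
    have hz : (2 * ∑ i, Complex.normSq (v i) : ℝ) = 0 := by
      rcases mul_eq_zero.mp h with h' | h'
      · exact absurd h' (by positivity)
      · exact h'
    have hsz : ∑ i, Complex.normSq (v i) = 0 := by linarith
    funext i
    have : ∀ j ∈ Finset.univ, (0:ℝ) ≤ Complex.normSq (v j) := fun j _ => Complex.normSq_nonneg _
    have hi := (Finset.sum_eq_zero_iff_of_nonneg this).mp hsz i (Finset.mem_univ i)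
    simpa using Complex.normSq_eq_zero.mp hi
  · -- subspaces
    obtain ⟨b, hb⟩ : ∃ b : ℂ, b ^ 2 = c :=
      IsAlgClosed.exists_pow_nat_eq c (n := 2) (by norm_num)
    have hb0 : b ≠ 0 := by
      intro h; rw [h] at hb; simp at hb; exact hc hb.symm
    have hbI : b * Complex.I ≠ 0 := by simp [hb0, Complex.I_ne_zero]
    refine ⟨LinearMap.range (Tmap n b), LinearMap.range (Tmap n (b * Complex.I)),
      finrank_Tmap_range hb0, finrank_Tmap_range hbI, isCompl_ranges hb0, ?_, ?_⟩
    · rintro v ⟨u, rfl⟩ hv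
      have hu : u ≠ 0 := by rintro rfl; exact hv (map_zero _)
      rw [bform hc]
      have hkey : (starRingEnd ℂ c) * ∑ i, 2 * (Tmap n b u) i * (Tmap n b u) i
          = ((2 * Complex.normSq c * ∑ i, u i ^ 2 : ℝ) : ℂ) := by
        have h1 : ∑ i, 2 * (Tmap n b u) i * (Tmap n b u) i
            = 2 * b ^ 2 * ∑ i, ((u i : ℂ)) ^ 2 := by
          rw [Finset.mul_sum]
          refine Finset.sum_congr rfl fun i _ => ?_
          simp only [Tmap, LinearMap.coe_mk, AddHom.coe_mk]
          ring
        rw [h1, hb]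
        have h2 : (starRingEnd ℂ c) * (2 * c * ∑ i, ((u i : ℂ)) ^ 2)
            = (c * starRingEnd ℂ c) * 2 * ∑ i, ((u i : ℂ)) ^ 2 := by ring
        rw [h2, Complex.mul_conj]
        push_cast
        ring
      rw [hkey]
      simp only [Complex.ofReal_re]
      have hupos : 0 < ∑ i, u i ^ 2 := by
        obtain ⟨i, hi⟩ := Function.ne_iff.mp hu
        have hi' : u i ≠ 0 := by simpa using hi
        refine Finset.sum_pos' (fun j _ => sq_nonneg _) ⟨i, Finset.mem_univ i, ?_⟩
        positivity
      have hnsq : 0 < Complex.normSq c := Complex.normSq_pos.mpr hc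
      positivity
    · rintro v ⟨u, rfl⟩ hv
      have hu : u ≠ 0 := by rintro rfl; exact hv (map_zero _)
      rw [bform hc]
      have hkey : (starRingEnd ℂ c) * ∑ i, 2 * (Tmap n (b * Complex.I) u) i * (Tmap n (b * Complex.I) u) i
          = ((-(2 * Complex.normSq c * ∑ i, u i ^ 2) : ℝ) : ℂ) := by
        have h1 : ∑ i, 2 * (Tmap n (b * Complex.I) u) i * (Tmap n (b * Complex.I) u) i
            = 2 * (b * Complex.I) ^ 2 * ∑ i, ((u i : ℂ)) ^ 2 := by
          rw [Finset.mul_sum]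
          refine Finset.sum_congr rfl fun i _ => ?_
          simp only [Tmap, LinearMap.coe_mk, AddHom.coe_mk]
          ring
        have h1' : (b * Complex.I) ^ 2 = -c := by
          rw [mul_pow, Complex.I_sq, hb]; ring
        rw [h1, h1']
        have h2 : (starRingEnd ℂ c) * (2 * -c * ∑ i, ((u i : ℂ)) ^ 2)
            = -((c * starRingEnd ℂ c) * 2 * ∑ i, ((u i : ℂ)) ^ 2) := by ring
        rw [h2, Complex.mul_conj]
        push_cast
        ring
      rw [hkey]
      simp only [Complex.ofReal_re]
      have hupos : 0 < ∑ i, u i ^ 2 := by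
        obtain ⟨i, hi⟩ := Function.ne_iff.mp hu
        have hi' : u i ≠ 0 := by simpa using hi
        refine Finset.sum_pos' (fun j _ => sq_nonneg _) ⟨i, Finset.mem_univ i, ?_⟩
        positivity
      have hnsq : 0 < Complex.normSq c := Complex.normSq_pos.mpr hc
      have hpos : 0 < 2 * Complex.normSq c * ∑ i, u i ^ 2 := by positivity
      have hinv : 0 < ‖c‖⁻¹ := by positivity
      exact mul_neg_of_pos_of_neg hinv (by linarith)
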